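/- arXiv:1304.2215 — 2 statements merged into one kernel-verified Lean document; each statement's English description precedes it below -/
import Mathlib

section
/- Let T be a Pultr template and suppose that the central Pultr functor Γ_T admits a right adjoint, i.e., a map Ω assigning a graph to each graph such that for all graphs G and K there exists a homomorphism of Γ_T(G) to K if and only if there exists a homomorphism of G to Ω(K). Then for every multiplicative graph K, the graph Ω(K) is multiplicative. -/
/-- A graph: a vertex set together with a symmetric adjacency relation (loops allowed). -/
structure SymGraph where
  V : Type
  Adj : V → V → Prop
  symm : ∀ ⦃u v⦄, Adj u v → Adj v u

/-- The categorial product of two graphs. -/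
def SymGraph.tensor (G H : SymGraph) : SymGraph where
  V := G.V × H.V
  Adj p q := G.Adj p.1 q.1 ∧ H.Adj p.2 q.2
  symm := fun p q h => ⟨G.symm h.1, H.symm h.2⟩

/-- A graph `K` is multiplicative if whenever a product `G × H` admits a homomorphism to
`K`, one of the factors `G` or `H` admits a homomorphism to `K`. -/
def GraphMultiplicative (K : SymGraph) : Prop :=
  ∀ G H : SymGraph, Nonempty ((G.tensor H).Adj →r K.Adj) →
    Nonempty (G.Adj →r K.Adj) ∨ Nonempty (H.Adj →r K.Adj)

/-- A Pultr template: graphs `P`, `Q` and homomorphisms `ε₁, ε₂ : P → Q` such that `Q`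
admits an automorphism `q` with `q ∘ ε₁ = ε₂` and `q ∘ ε₂ = ε₁`. -/
structure PultrTemplate where
  P : SymGraph
  Q : SymGraph
  e1 : P.Adj →r Q.Adj
  e2 : P.Adj →r Q.Adj
  q : Q.V → Q.V
  q_bij : Function.Bijective q
  q_adj : ∀ u v, Q.Adj u v ↔ Q.Adj (q u) (q v)
  q_e1 : ∀ p, q (e1 p) = e2 p
  q_e2 : ∀ p, q (e2 p) = e1 p

/-- The central Pultr functor `Γ_T`: vertices of `Γ_T(K)` are the homomorphisms
`g : P → K`, with `g₁ ~ g₂` iff there is a homomorphism `h : Q → K` with `g₁ = h ∘ ε₁`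
and `g₂ = h ∘ ε₂`. -/
def Gamma (T : PultrTemplate) (K : SymGraph) : SymGraph where
  V := T.P.Adj →r K.Adj
  Adj g1 g2 := ∃ h : T.Q.Adj →r K.Adj, (∀ p, h (T.e1 p) = g1 p) ∧ (∀ p, h (T.e2 p) = g2 p)
  symm := by
    rintro g1 g2 ⟨h, h1, h2⟩
    refine ⟨⟨fun x => h (T.q x), fun hab => h.map_rel ((T.q_adj _ _).mp hab)⟩, ?_, ?_⟩
    · intro p
      show h (T.q (T.e1 p)) = g2 p
      rw [T.q_e1 p]; exact h2 p
    · intro p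
      show h (T.q (T.e2 p)) = g1 p
      rw [T.q_e2 p]; exact h1 p

/-- If the central Pultr functor `Γ_T` admits a right adjoint `Ω`, then for every
multiplicative graph `K`, the graph `Ω(K)` is multiplicative. -/
theorem right_adjoint_preserves_multiplicative (T : PultrTemplate) (Ω : SymGraph → SymGraph)
    (hΩ : ∀ G K : SymGraph,
      Nonempty ((Gamma T G).Adj →r K.Adj) ↔ Nonempty (G.Adj →r (Ω K).Adj))
    (K : SymGraph) (hK : GraphMultiplicative K) :
    GraphMultiplicative (Ω K) := by
  intro G H ⟨f⟩
  obtain ⟨c⟩ := (hΩ (G.tensor H) K).mpr ⟨f⟩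
  -- pairing homomorphism Γ(G) × Γ(H) → Γ(G × H)
  let m : ((Gamma T G).tensor (Gamma T H)).Adj →r (Gamma T (G.tensor H)).Adj :=
    { toFun := fun p =>
        let g : T.P.Adj →r G.Adj := p.1
        let g' : T.P.Adj →r H.Adj := p.2
        ⟨fun x => (g x, g' x), fun hab => ⟨g.map_rel hab, g'.map_rel hab⟩⟩
      map_rel' := by
        rintro ⟨g1, g1'⟩ ⟨g2, g2'⟩ ⟨⟨h1, a1, b1⟩, ⟨h2, a2, b2⟩⟩
        refine ⟨⟨fun x => (h1 x, h2 x), fun hab => ⟨h1.map_rel hab, h2.map_rel hab⟩⟩, ?_, ?_⟩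
        · intro p; exact Prod.ext (a1 p) (a2 p)
        · intro p; exact Prod.ext (b1 p) (b2 p) }
  rcases hK (Gamma T G) (Gamma T H) ⟨c.comp m⟩ with h | h
  · exact Or.inl ((hΩ G K).mp h)
  · exact Or.inr ((hΩ H K).mp h)
end

section
/- Let s, r, s', r' be odd positive integers with s/r ≤ s'/r'. Then for every graph G, there exists a homomorphism of P^s_r(G) to P^{s'}_{r'}(G), and there exists a homomorphism of R^{r'}_{s'}(G) to R^r_s(G). -/
/-- `Γ_m(G)`: the graph on the vertex set of `G` in which `u ~ v` iff `G` contains a walk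
of length exactly `m` from `u` to `v`. -/
def GammaM (m : ℕ) (G : SymGraph) : SymGraph where
  V := G.V
  Adj u v := ∃ w : ℕ → G.V, w 0 = u ∧ w m = v ∧ ∀ i < m, G.Adj (w i) (w (i + 1))
  symm := by
    rintro u v ⟨w, h0, hm, hw⟩
    refine ⟨fun i => w (m - i), by simpa using hm, by simpa using h0, ?_⟩
    intro i hi
    have h1 : m - i - 1 + 1 = m - i := by omega
    have h2 : m - (i + 1) = m - i - 1 := by omega
    have := hw (m - i - 1) (by omega)
    rw [h1] at this
    simp only [h2]
    exact G.symm this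

/-- Two sets of vertices are completely joined if every vertex of one is adjacent to every
vertex of the other. -/
def CJ (H : SymGraph) (A B : Set H.V) : Prop := ∀ a ∈ A, ∀ b ∈ B, H.Adj a b

/-- The extended tuple `(U₀, U₁, …, U_k)` with `U₀ = {u}`. -/
def extT (H : SymGraph) (u : H.V) {k : ℕ} (U : Fin k → Set H.V) : Fin (k + 1) → Set H.V :=
  Fin.cases {u} U

/-- The vertices of `Ω_{2k+1}(H)`: the `(k+1)`-tuples `(u, U₁, …, U_k)` with `u ∈ V(H)`,
`U₁` a subset of the neighbourhood of `u` in `H`, and each `U_i` completely joined to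
`U_{i-1}` for `i = 2, …, k`. -/
def OmegaVert (H : SymGraph) (k : ℕ) : Type :=
  {p : H.V × (Fin k → Set H.V) //
    ∀ i : Fin k, CJ H (extT H p.1 p.2 i.castSucc) (extT H p.1 p.2 i.succ)}

/-- `Ω_{2k+1}(H)`: two tuples `(u, U₁, …, U_k)` and `(v, V₁, …, V_k)` are adjacent iff
`u ∈ V₁`, `v ∈ U₁`, `U_{i-1} ⊆ V_i` and `V_{i-1} ⊆ U_i` for `i = 2, …, k`, and `U_k` is
completely joined to `V_k` (with the convention `U₀ = {u}`, `V₀ = {v}`). -/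
def OmegaM (k : ℕ) (H : SymGraph) : SymGraph where
  V := OmegaVert H k
  Adj p q :=
    (∀ i : Fin k, extT H p.1.1 p.1.2 i.castSucc ⊆ extT H q.1.1 q.1.2 i.succ ∧
                  extT H q.1.1 q.1.2 i.castSucc ⊆ extT H p.1.1 p.1.2 i.succ) ∧
    CJ H (extT H p.1.1 p.1.2 (Fin.last k)) (extT H q.1.1 q.1.2 (Fin.last k))
  symm := by
    rintro p q ⟨h1, h2⟩
    exact ⟨fun i => ⟨(h1 i).2, (h1 i).1⟩, fun a ha b hb => H.symm (h2 b hb a ha)⟩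

/-- Vertices of the `r`-subdivision, before identification: the original vertices,
together with, for each ordered pair `(u,v)` forming an edge and each `i ∈ {0, …, r}`,
the `i`-th vertex of the path of length `r` replacing the edge, directed from `u` to `v`. -/
def SubVert (r : ℕ) (G : SymGraph) : Type :=
  G.V ⊕ {p : G.V × G.V // G.Adj p.1 p.2} × Fin (r + 1)

/-- The identifications defining the `r`-subdivision: the `0`-th vertex of the path for
`(u,v)` is `u` itself, and the path for `(v,u)` is the reversal of the path for `(u,v)`. -/
inductive SubRel (r : ℕ) (G : SymGraph) : SubVert r G → SubVert r G → Prop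
  | glue (u v : G.V) (h : G.Adj u v) :
      SubRel r G (Sum.inl u) (Sum.inr (⟨(u, v), h⟩, 0))
  | flip (u v : G.V) (h : G.Adj u v) (i : Fin (r + 1)) :
      SubRel r G (Sum.inr (⟨(u, v), h⟩, i))
        (Sum.inr (⟨(v, u), G.symm h⟩, ⟨r - i.val, by omega⟩))

/-- Adjacency before identification: consecutive vertices on the same path. -/
def subPreAdj (r : ℕ) (G : SymGraph) : SubVert r G → SubVert r G → Prop
  | Sum.inr a, Sum.inr b => a.1 = b.1 ∧ (b.2.val = a.2.val + 1 ∨ a.2.val = b.2.val + 1)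
  | _, _ => False

/-- `Λ_r(G)`: the `r`-subdivision of `G`, obtained by replacing each edge of `G` with a
path of `r` edges. -/
def LambdaR (r : ℕ) (G : SymGraph) : SymGraph where
  V := Quot (SubRel r G)
  Adj X Y := ∃ a b, Quot.mk _ a = X ∧ Quot.mk _ b = Y ∧ subPreAdj r G a b
  symm := by
    rintro X Y ⟨a, b, ha, hb, hab⟩
    refine ⟨b, a, hb, ha, ?_⟩
    match a, b, hab with
    | Sum.inr a, Sum.inr b, ⟨h1, h2⟩ => exact ⟨h1.symm, h2.symm⟩

/-- `P^s_r(G) = Γ_s(Λ_r(G))`. -/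
def PF (s r : ℕ) (G : SymGraph) : SymGraph := GammaM s (LambdaR r G)

/-- `R^r_s(H) = Γ_r(Ω_s(H))`, where `s = 2k+1`. -/
def RF (r k : ℕ) (H : SymGraph) : SymGraph := GammaM r (OmegaM k H)

section Walks

variable {G H K K' : SymGraph}

/-- Walk of length `n` as a function. -/
def IsWalk (G : SymGraph) (n : ℕ) (w : ℕ → G.V) : Prop := ∀ i < n, G.Adj (w i) (w (i + 1))

/-- There is a walk of length `n` from `u` to `v`. -/
def WalkFT (G : SymGraph) (n : ℕ) (u v : G.V) : Prop :=
  ∃ w : ℕ → G.V, w 0 = u ∧ w n = v ∧ IsWalk G n w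

lemma gamma_adj {m : ℕ} {u v : G.V} : (GammaM m G).Adj u v ↔ WalkFT G m u v := Iff.rfl

lemma wft_zero {u v : G.V} (h : WalkFT G 0 u v) : u = v := by
  obtain ⟨w, h0, h1, -⟩ := h; rw [← h0, h1]

lemma wft_refl (u : G.V) : WalkFT G 0 u u := ⟨fun _ => u, rfl, rfl, fun i hi => by omega⟩

lemma wft_adj {u v : G.V} (h : G.Adj u v) : WalkFT G 1 u v := by
  refine ⟨fun i => if i = 0 then u else v, by simp, by simp, fun i hi => ?_⟩
  have : i = 0 := by omega
  simpa [this]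

lemma wft_adj_of {u v : G.V} (h : WalkFT G 1 u v) : G.Adj u v := by
  obtain ⟨w, h0, h1, hw⟩ := h
  have := hw 0 (by omega)
  rwa [h0, h1] at this

lemma wft_concat {n m : ℕ} {u v x : G.V} (h1 : WalkFT G n u v) (h2 : WalkFT G m v x) :
    WalkFT G (n + m) u x := by
  obtain ⟨w1, e10, e11, hw1⟩ := h1
  obtain ⟨w2, e20, e21, hw2⟩ := h2
  refine ⟨fun i => if i ≤ n then w1 i else w2 (i - n), by simp [e10], ?_, ?_⟩
  · by_cases hm : m = 0
    · subst hm; simp only [Nat.add_zero, if_pos le_rfl, e11, ← e20, ← e21]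
    · simp only [if_neg (by omega : ¬ n + m ≤ n)]
      rw [Nat.add_sub_cancel_left, e21]
  · intro i hi
    by_cases hin : i + 1 ≤ n
    · simp only [if_pos (by omega : i ≤ n), if_pos hin]
      exact hw1 i (by omega)
    · by_cases hin2 : i ≤ n
      · have : i = n := by omega
        subst this
        simp only [if_pos le_rfl, if_neg hin, Nat.add_sub_cancel_left, e11, ← e20]
        exact hw2 0 (by omega)
      · simp only [if_neg hin2, if_neg hin]
        have h3 : i + 1 - n = (i - n) + 1 := by omega
        rw [h3]
        exact hw2 (i - n) (by omega)

lemma wft_rev {n : ℕ} {u v : G.V} (h : WalkFT G n u v) : WalkFT G n v u := by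
  obtain ⟨w, h0, h1, hw⟩ := h
  refine ⟨fun i => w (n - i), by simpa using h1, by simpa using h0, ?_⟩
  intro i hi
  have e1 : n - i - 1 + 1 = n - i := by omega
  have e2 : n - (i + 1) = n - i - 1 := by omega
  have := hw (n - i - 1) (by omega)
  rw [e1] at this
  show G.Adj (w (n - i)) (w (n - (i + 1)))
  rw [e2]
  exact G.symm this

lemma wft_add_two {n : ℕ} {u v : G.V} (hn : 1 ≤ n) (h : WalkFT G n u v) :
    WalkFT G (n + 2) u v := by
  obtain ⟨w, h0, h1, hw⟩ := h
  refine ⟨fun i => if i = 0 then u else if i = 1 then w 1 else w (i - 2), by simp, ?_, ?_⟩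
  · simp only [if_neg (by omega : ¬ n + 2 = 0), if_neg (by omega : ¬ n + 2 = 1)]
    simpa using h1
  · intro i hi
    rcases Nat.lt_or_ge i 2 with h2 | h2
    · interval_cases i
      · simpa [← h0] using hw 0 (by omega)
      · simp only [if_neg (by omega : ¬ (1:ℕ) = 0), if_pos rfl,
          if_neg (by omega : ¬ (2:ℕ) = 0), if_neg (by omega : ¬ (2:ℕ) = 1)]
        have := hw 0 (by omega)
        simpa [h0] using G.symm (h0 ▸ this)
    · simp only [if_neg (by omega : ¬ i = 0), if_neg (by omega : ¬ i = 1),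
        if_neg (by omega : ¬ i + 1 = 0), if_neg (by omega : ¬ i + 1 = 1)]
      have e : i + 1 - 2 = (i - 2) + 1 := by omega
      rw [e]
      exact hw (i - 2) (by omega)

lemma wft_pad {n m : ℕ} {u v : G.V} (hn : 1 ≤ n) (hnm : n ≤ m) (hp : n % 2 = m % 2)
    (h : WalkFT G n u v) : WalkFT G m u v := by
  obtain ⟨j, rfl⟩ : ∃ j, m = n + 2 * j := ⟨(m - n) / 2, by omega⟩
  clear hnm hp
  induction j with
  | zero => simpa using h
  | succ j ih =>
    have := wft_add_two (by omega) ih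
    have e : n + 2 * j + 2 = n + 2 * (j + 1) := by omega
    rwa [e] at this

lemma wft_split {n m : ℕ} {u x : G.V} (h : WalkFT G (n + m) u x) :
    ∃ v, WalkFT G n u v ∧ WalkFT G m v x := by
  obtain ⟨w, h0, h1, hw⟩ := h
  refine ⟨w n, ⟨w, h0, rfl, fun i hi => hw i (by omega)⟩,
    ⟨fun i => w (n + i), rfl, by rw [← h1], fun i hi => ?_⟩⟩
  show G.Adj (w (n + i)) (w (n + (i + 1)))
  have e : n + (i + 1) = (n + i) + 1 := by omega
  rw [e]
  exact hw (n + i) (by omega)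

lemma wft_map {n : ℕ} {u v : G.V} (f : G.Adj →r H.Adj) (h : WalkFT G n u v) :
    WalkFT H n (f u) (f v) := by
  obtain ⟨w, h0, h1, hw⟩ := h
  exact ⟨fun i => f (w i), by show f (w 0) = _; rw [h0], by show f (w n) = _; rw [h1],
    fun i hi => f.map_rel (hw i hi)⟩

/-- If adjacency in `K` yields `c`-walks in `K'` between images, then `f` induces
`Γ_a K → Γ_{ac} K'`. -/
lemma wft_mul {a c : ℕ} (f : K.V → K'.V)
    (hf : ∀ x y, K.Adj x y → WalkFT K' c (f x) (f y)) :
    ∀ {u v : K.V}, WalkFT K a u v → WalkFT K' (a * c) (f u) (f v) := by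
  induction a with
  | zero => intro u v h; rw [wft_zero h]; simpa using wft_refl _
  | succ a ih =>
    intro u v h
    obtain ⟨z, h1, h2⟩ := wft_split (n := a) (m := 1) h
    have := wft_concat (ih h1) (hf _ _ (wft_adj_of h2))
    have e : a * c + c = (a + 1) * c := by ring
    rwa [e] at this

/-- If `c`-walks in `K` yield adjacency in `K'` between images, then `f` induces
`Γ_{ac} K → Γ_a K'`. -/
lemma wft_div {a c : ℕ} (f : K.V → K'.V)
    (hf : ∀ x y, WalkFT K c x y → K'.Adj (f x) (f y)) :
    ∀ {u v : K.V}, WalkFT K (a * c) u v → WalkFT K' a (f u) (f v) := by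
  induction a with
  | zero =>
    intro u v h
    have : u = v := wft_zero (by simpa using h)
    rw [this]; exact wft_refl _
  | succ a ih =>
    intro u v h
    have e : (a + 1) * c = a * c + c := by ring
    rw [e] at h
    obtain ⟨z, h1, h2⟩ := wft_split h
    exact wft_concat (ih h1) (wft_adj (hf _ _ h2))

def homGammaMul (a c : ℕ) (f : K.V → K'.V)
    (hf : ∀ x y, K.Adj x y → WalkFT K' c (f x) (f y)) :
    (GammaM a K).Adj →r (GammaM (a * c) K').Adj :=
  ⟨f, fun h => wft_mul f hf h⟩

def homGammaDiv (a c : ℕ) (f : K.V → K'.V)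
    (hf : ∀ x y, WalkFT K c x y → K'.Adj (f x) (f y)) :
    (GammaM (a * c) K).Adj →r (GammaM a K').Adj :=
  ⟨f, fun h => wft_div f hf h⟩

def homGammaMono (a a' : ℕ) (h1 : 1 ≤ a) (hle : a ≤ a') (hp : a % 2 = a' % 2) :
    (GammaM a K).Adj →r (GammaM a' K).Adj :=
  ⟨id, fun h => wft_pad h1 hle hp h⟩

def homGammaOf {m : ℕ} (f : K.Adj →r K'.Adj) : (GammaM m K).Adj →r (GammaM m K').Adj :=
  ⟨f, fun h => wft_map f h⟩

end Walks

section Lambda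

variable {G : SymGraph} {N : ℕ}

/-- Directed edges of `G`. -/
abbrev GEdge (G : SymGraph) := {p : G.V × G.V // G.Adj p.1 p.2}

def erev (e : GEdge G) : GEdge G := ⟨(e.1.2, e.1.1), G.symm e.2⟩

@[simp] lemma erev_fst (e : GEdge G) : (erev e).1.1 = e.1.2 := rfl
@[simp] lemma erev_snd (e : GEdge G) : (erev e).1.2 = e.1.1 := rfl

/-- Vertex of `Λ_N G` at position `i` on directed edge `e`. -/
def mkv (N : ℕ) (G : SymGraph) (e : GEdge G) (i : ℕ) (h : i ≤ N) : (LambdaR N G).V :=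
  Quot.mk _ (Sum.inr (e, ⟨i, by omega⟩))

def mki (N : ℕ) (G : SymGraph) (u : G.V) : (LambdaR N G).V := Quot.mk _ (Sum.inl u)

lemma mkv_flip (e : GEdge G) (i : ℕ) (h : i ≤ N) :
    mkv N G e i h = mkv N G (erev e) (N - i) (by omega) := by
  obtain ⟨⟨u, v⟩, he⟩ := e
  exact Quot.sound (SubRel.flip u v he ⟨i, by omega⟩)

lemma mkv_zero (e : GEdge G) : mkv N G e 0 (by omega) = mki N G e.1.1 := by
  obtain ⟨⟨u, v⟩, he⟩ := e
  exact (Quot.sound (SubRel.glue u v he)).symm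

lemma mkv_last (e : GEdge G) : mkv N G e N le_rfl = mki N G e.1.2 := by
  rw [mkv_flip]
  simp only [Nat.sub_self]
  rw [mkv_zero, erev_fst]

lemma mkv_congr (e : GEdge G) {i j : ℕ} (hi : i ≤ N) (hj : j ≤ N) (hij : i = j) :
    mkv N G e i hi = mkv N G e j hj := by subst hij; rfl

lemma lambda_adj_elim {X Y : (LambdaR N G).V} (h : (LambdaR N G).Adj X Y) :
    ∃ (g : GEdge G) (q q' : ℕ) (hq : q ≤ N) (hq' : q' ≤ N),
      X = mkv N G g q hq ∧ Y = mkv N G g q' hq' ∧ (q' = q + 1 ∨ q = q' + 1) := by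
  obtain ⟨a, b, ha, hb, hab⟩ := h
  match a, b, hab with
  | Sum.inr a, Sum.inr b, ⟨h1, h2⟩ =>
    refine ⟨a.1, a.2.val, b.2.val, by omega, by omega, ?_, ?_, by omega⟩
    · rw [← ha]; rfl
    · rw [← hb, h1]; rfl

lemma lambda_adj_intro (g : GEdge G) (q q' : ℕ) (hq : q ≤ N) (hq' : q' ≤ N)
    (hqq : q' = q + 1 ∨ q = q' + 1) :
    (LambdaR N G).Adj (mkv N G g q hq) (mkv N G g q' hq') :=
  ⟨Sum.inr (g, ⟨q, by omega⟩), Sum.inr (g, ⟨q', by omega⟩), rfl, rfl, rfl, by simpa using hqq⟩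

/-- Explicit description of the equivalence classes of `SubRel`. -/
def LRel (N : ℕ) (G : SymGraph) : SubVert N G → SubVert N G → Prop
  | Sum.inl u, Sum.inl v => u = v
  | Sum.inl u, Sum.inr (f, j) => (j.val = 0 ∧ f.1.1 = u) ∨ (j.val = N ∧ f.1.2 = u)
  | Sum.inr (f, j), Sum.inl u => (j.val = 0 ∧ f.1.1 = u) ∨ (j.val = N ∧ f.1.2 = u)
  | Sum.inr (e, i), Sum.inr (f, j) =>
      (e.1 = f.1 ∧ i.val = j.val) ∨
      (e.1.1 = f.1.2 ∧ e.1.2 = f.1.1 ∧ i.val + j.val = N) ∨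
      (i.val = 0 ∧ j.val = 0 ∧ e.1.1 = f.1.1) ∨
      (i.val = 0 ∧ j.val = N ∧ e.1.1 = f.1.2) ∨
      (i.val = N ∧ j.val = 0 ∧ e.1.2 = f.1.1) ∨
      (i.val = N ∧ j.val = N ∧ e.1.2 = f.1.2)

lemma lrel_refl (a : SubVert N G) : LRel N G a a := by
  match a with
  | Sum.inl u => rfl
  | Sum.inr (e, i) => exact Or.inl ⟨rfl, rfl⟩

lemma lrel_invariant (hN : 0 < N) (a a' : SubVert N G) (h : SubRel N G a a') (x : SubVert N G) :
    LRel N G a x ↔ LRel N G a' x := by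
  induction h with
  | glue u v huv =>
    have hz : ((0 : Fin (N+1))).val = 0 := by simp
    match x with
    | Sum.inl w =>
      show u = w ↔ _
      simp only [LRel]
      constructor
      · intro h; exact Or.inl ⟨rfl, h⟩
      · rintro (⟨-, h⟩ | ⟨h, -⟩)
        · exact h
        · omega
    | Sum.inr (f, j) =>
      show _ ∨ _ ↔ _
      simp only [LRel]
      constructor
      · rintro (⟨hj, hf⟩ | ⟨hj, hf⟩)
        · exact Or.inr (Or.inr (Or.inl ⟨hz, hj, hf.symm⟩))
        · exact Or.inr (Or.inr (Or.inr (Or.inl ⟨hz, hj, hf.symm⟩)))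
      · rintro (⟨he, hij⟩ | ⟨h1, h2, hij⟩ | ⟨hi, hj, hf⟩ | ⟨hi, hj, hf⟩ | ⟨hi, hj, hf⟩ |
          ⟨hi, hj, hf⟩)
        · exact Or.inl ⟨by omega, by rw [← he]⟩
        · exact Or.inr ⟨by omega, by rw [← h1]⟩
        · exact Or.inl ⟨hj, hf.symm⟩
        · exact Or.inr ⟨hj, hf.symm⟩
        · omega
        · omega
  | flip u v huv i =>
    have hi : i.val ≤ N := by omega
    match x with
    | Sum.inl w =>
      show _ ∨ _ ↔ _ ∨ _
      simp only [LRel, Fin.val_mk]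
      constructor
      · rintro (⟨h1, h2⟩ | ⟨h1, h2⟩)
        · exact Or.inr ⟨by omega, h2⟩
        · exact Or.inl ⟨by omega, h2⟩
      · rintro (⟨h1, h2⟩ | ⟨h1, h2⟩)
        · exact Or.inr ⟨by omega, h2⟩
        · exact Or.inl ⟨by omega, h2⟩
    | Sum.inr (f, j) =>
      have hj : j.val ≤ N := by omega
      show _ ↔ _
      simp only [LRel, Fin.val_mk]
      constructor
      · rintro (⟨he, hij⟩ | ⟨h1, h2, hij⟩ | ⟨hi0, hj0, hf⟩ | ⟨hi0, hj0, hf⟩ | ⟨hi0, hj0, hf⟩ |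
          ⟨hi0, hj0, hf⟩)
        · refine Or.inr (Or.inl ⟨?_, ?_, by omega⟩) <;>
            simp only [← he]
        · exact Or.inl ⟨by simp only [Prod.ext_iff]; exact ⟨h2, h1⟩, by omega⟩
        · exact Or.inr (Or.inr (Or.inr (Or.inr (Or.inl ⟨by omega, hj0, hf⟩))))
        · exact Or.inr (Or.inr (Or.inr (Or.inr (Or.inr ⟨by omega, hj0, hf⟩))))
        · exact Or.inr (Or.inr (Or.inl ⟨by omega, hj0, hf⟩))
        · exact Or.inr (Or.inr (Or.inr (Or.inl ⟨by omega, hj0, hf⟩)))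
      · rintro (⟨he, hij⟩ | ⟨h1, h2, hij⟩ | ⟨hi0, hj0, hf⟩ | ⟨hi0, hj0, hf⟩ | ⟨hi0, hj0, hf⟩ |
          ⟨hi0, hj0, hf⟩)
        · have e1 : v = f.1.1 := congrArg Prod.fst he
          have e2 : u = f.1.2 := congrArg Prod.snd he
          exact Or.inr (Or.inl ⟨e2, e1, by omega⟩)
        · exact Or.inl ⟨by simp only [Prod.ext_iff]; exact ⟨h2, h1⟩, by omega⟩
        · exact Or.inr (Or.inr (Or.inr (Or.inr (Or.inl ⟨by omega, hj0, hf⟩))))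
        · exact Or.inr (Or.inr (Or.inr (Or.inr (Or.inr ⟨by omega, hj0, hf⟩))))
        · exact Or.inr (Or.inr (Or.inl ⟨by omega, hj0, hf⟩))
        · exact Or.inr (Or.inr (Or.inr (Or.inl ⟨by omega, hj0, hf⟩)))

lemma quot_eq_lrel (hN : 0 < N) {a b : SubVert N G}
    (h : Quot.mk (SubRel N G) a = Quot.mk (SubRel N G) b) : LRel N G a b := by
  have wd : ∀ (p q : SubVert N G), SubRel N G p q →
      (fun z => LRel N G z b) p = (fun z => LRel N G z b) q := by
    intro p q hpq
    exact propext (lrel_invariant hN p q hpq b)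
  have h2 := congrArg (Quot.lift (fun z => LRel N G z b) wd) h
  exact Eq.mpr h2 (lrel_refl b)

end Lambda

section Phi

/-- Scaling-down map on positions: `φ i = ⌊i/c⌋ + (i mod c) mod 2`. -/
def phiF (c i : ℕ) : ℕ := i / c + (i % c) % 2

lemma phiF_le {b c i : ℕ} (hc : 0 < c) (h : i ≤ b * c) : phiF c i ≤ b := by
  unfold phiF
  rcases Nat.lt_or_ge i (b * c) with hlt | hge
  · have h1 : i / c < b := Nat.div_lt_of_lt_mul (by rw [Nat.mul_comm]; omega)
    have h2 : i % c % 2 ≤ 1 := by omega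
    omega
  · have : i = b * c := by omega
    subst this
    rw [Nat.mul_div_cancel _ hc, Nat.mul_mod_left]
    simp

lemma phiF_zero (c : ℕ) : phiF c 0 = 0 := by simp [phiF]

lemma phiF_flip {b c i : ℕ} (hc : c % 2 = 1) (h : i ≤ b * c) :
    phiF c (b * c - i) = b - phiF c i := by
  have hc0 : 0 < c := by omega
  obtain ⟨q, s, hi, hsc⟩ : ∃ q s, i = c * q + s ∧ s < c :=
    ⟨i / c, i % c, (Nat.div_add_mod i c).symm, Nat.mod_lt _ hc0⟩
  have hphi : phiF c i = q + s % 2 := by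
    unfold phiF
    rw [hi, Nat.mul_add_div hc0, Nat.mul_add_mod, Nat.div_eq_of_lt hsc,
      Nat.mod_eq_of_lt hsc]
    omega
  have hqb : q ≤ b := by
    have h2 : i / c ≤ b * c / c := Nat.div_le_div_right h
    rw [Nat.mul_div_cancel _ hc0, hi, Nat.mul_add_div hc0, Nat.div_eq_of_lt hsc] at h2
    omega
  rcases Nat.eq_zero_or_pos s with h0 | hpos
  · have e : b * c - i = c * (b - q) := by
      rw [hi, h0, Nat.add_zero, Nat.mul_sub, Nat.mul_comm b c]
    rw [e, hphi]
    unfold phiF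
    rw [Nat.mul_div_cancel_left _ hc0, Nat.mul_mod_right]
    omega
  · have hqb' : q < b := by
      rcases Nat.lt_or_ge q b with h' | h'
      · exact h'
      · exfalso
        have : q = b := by omega
        subst this
        have : i ≤ c * q := by rw [Nat.mul_comm] at h; exact h
        omega
    have e : b * c - i = c * (b - q - 1) + (c - s) := by
      have e2 : c * (b - q - 1) + (c - s) + i = b * c := by
        rw [hi]
        have : c * (b - q - 1) + c = c * (b - q) := by
          rw [Nat.mul_sub, Nat.mul_sub, Nat.mul_one]
          have : c * q + c ≤ c * b := by
            have : q + 1 ≤ b := hqb'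
            calc c * q + c = c * (q + 1) := by ring
              _ ≤ c * b := Nat.mul_le_mul_left c this
          omega
        have hcb : c * q + c ≤ c * b := by
          have : q + 1 ≤ b := hqb'
          calc c * q + c = c * (q + 1) := by ring
            _ ≤ c * b := Nat.mul_le_mul_left c this
        have h9 : c * (b - q) = c * b - c * q := Nat.mul_sub c b q
        rw [Nat.mul_comm b c]
        omega
      omega
    rw [e, hphi]
    unfold phiF
    rw [Nat.mul_add_div hc0, Nat.mul_add_mod,
      Nat.div_eq_of_lt (show c - s < c by omega),
      Nat.mod_eq_of_lt (show c - s < c by omega)]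
    have hpar : (c - s) % 2 + s % 2 = 1 := by omega
    omega

lemma phiF_parity {c i : ℕ} (hc : c % 2 = 1) : phiF c i % 2 = i % 2 := by
  obtain ⟨q, s, hi, hsc⟩ : ∃ q s, i = c * q + s ∧ s < c :=
    ⟨i / c, i % c, (Nat.div_add_mod i c).symm, Nat.mod_lt _ (by omega)⟩
  have hphi : phiF c i = q + s % 2 := by
    unfold phiF
    rw [hi, Nat.mul_add_div (by omega), Nat.mul_add_mod, Nat.div_eq_of_lt hsc,
      Nat.mod_eq_of_lt hsc]
    omega
  obtain ⟨d, hd⟩ : ∃ d, c = 2 * d + 1 := ⟨c / 2, by omega⟩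
  have key : i = 2 * (d * q) + q + s := by rw [hi, hd]; ring
  omega

lemma phiF_div_le {c i j : ℕ} (hc : 0 < c) (hij : i ≤ j) (hd : j - i ≤ c) :
    j / c ≤ i / c + 1 := by
  have h1 : j ≤ i + c := by omega
  have h2 : j / c ≤ (i + c) / c := Nat.div_le_div_right h1
  rwa [Nat.add_div_right _ hc] at h2

/-- Key one-edge estimate: positions at odd distance `≤ c` map to adjacent positions. -/
lemma phiF_step {c i j : ℕ} (hc : c % 2 = 1) (hij : i ≤ j) (hd : j - i ≤ c)
    (hp : (i + c) % 2 = j % 2) :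
    phiF c j = phiF c i + 1 ∨ phiF c i = phiF c j + 1 := by
  have hc0 : 0 < c := by omega
  have h1 : i / c ≤ j / c := Nat.div_le_div_right hij
  have h2 : j / c ≤ i / c + 1 := phiF_div_le hc0 hij hd
  have h3 := phiF_parity (i := i) hc
  have h4 := phiF_parity (i := j) hc
  have h5 : i % c % 2 ≤ 1 := by omega
  have h6 : j % c % 2 ≤ 1 := by omega
  have hip : i % 2 ≤ 1 := by omega
  have hjp : j % 2 ≤ 1 := by omega
  unfold phiF at *
  generalize hA : i / c = A at *
  generalize hB : j / c = B at *
  generalize hC : i % c % 2 = C at *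
  generalize hD : j % c % 2 = D at *
  generalize hE : i % 2 = E at *
  generalize hF : j % 2 = F at *
  omega

end Phi

section Nu

variable {G : SymGraph}

lemma phiF_small_even {c i : ℕ} (hi2 : i % 2 = 0) (hic : i < c) : phiF c i = 0 := by
  unfold phiF
  rw [Nat.div_eq_of_lt hic, Nat.mod_eq_of_lt hic]
  omega

lemma phiF_small_odd {c i : ℕ} (hc : 0 < c) (hi2 : i % 2 = 1) (hic : i ≤ c) : phiF c i = 1 := by
  rcases Nat.lt_or_ge i c with h | h
  · unfold phiF
    rw [Nat.div_eq_of_lt h, Nat.mod_eq_of_lt h]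
    omega
  · have : i = c := by omega
    subst this
    unfold phiF
    rw [Nat.div_self hc, Nat.mod_self]

/-- The scaling-down vertex map `Λ_{bc} G → Λ_b G`. -/
def numap (b c : ℕ) (G : SymGraph) (hc : c % 2 = 1) : (LambdaR (b * c) G).V → (LambdaR b G).V :=
  Quot.lift
    (fun a => match a with
      | Sum.inl u => mki b G u
      | Sum.inr (e, i) =>
        mkv b G e (phiF c i.val) (phiF_le (by omega) (Nat.lt_succ_iff.mp i.isLt)))
    (by
      intro a a' h
      induction h with
      | glue u v huv =>
        exact (mkv_zero ⟨(u,v),huv⟩).symm.trans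
          (mkv_congr _ (Nat.zero_le _) _ (by simp [phiF_zero]))
      | flip u v huv i =>
        have hi : i.val ≤ b * c := Nat.lt_succ_iff.mp i.isLt
        exact (mkv_flip ⟨(u,v),huv⟩ (phiF c i.val)
            (phiF_le (by omega) hi)).trans
          (mkv_congr _ (by omega) _ (phiF_flip hc hi).symm))

lemma numap_mkv (b c : ℕ) (hc : c % 2 = 1) (e : GEdge G) (i : ℕ) (h : i ≤ b * c) :
    numap b c G hc (mkv (b*c) G e i h) = mkv b G e (phiF c i) (phiF_le (by omega) h) := rfl

/-- Invariant for the key induction: after `n` steps from `x`, the current vertex `z`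
is on a common edge with `x`, or on an edge sharing the near endpoint. -/
def KInv (N : ℕ) (G : SymGraph) (n : ℕ) (x z : (LambdaR N G).V) : Prop :=
  (x = z ∧ n % 2 = 0) ∨
  (∃ (e : GEdge G) (i j : ℕ) (hi : i ≤ N) (hj : j ≤ N),
     x = mkv N G e i hi ∧ z = mkv N G e j hj ∧ i - j ≤ n ∧ j - i ≤ n ∧
     (i + n) % 2 = j % 2) ∨
  (∃ (e f : GEdge G) (i j : ℕ) (hi : i ≤ N) (hj : j ≤ N),
     e.1.1 = f.1.1 ∧ x = mkv N G e i hi ∧ z = mkv N G f j hj ∧ i + j ≤ n ∧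
     (i + j) % 2 = n % 2)

lemma kinv_step {N c n : ℕ} (hN : 0 < N) (hcN : c ≤ N) (hn : n + 1 ≤ c)
    {x z z' : (LambdaR N G).V} (h : KInv N G n x z) (hadj : (LambdaR N G).Adj z z') :
    KInv N G (n + 1) x z' := by
  obtain ⟨g, q, q', hq, hq', hz, hz', hstep⟩ := lambda_adj_elim hadj
  rcases h with ⟨hxz, hpar⟩ | ⟨e, i, j, hi, hj, hx, hzej, hb1, hb2, hpar⟩ |
    ⟨e, f, i, j, hi, hj, hef, hx, hzfj, hsum, hpar⟩
  · -- was at the start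
    refine Or.inr (Or.inl ⟨g, q, q', hq, hq', by rw [hxz, hz], hz', by omega, by omega,
      by omega⟩)
  · -- same-edge clause
    have hrel : LRel N G (Sum.inr (e, ⟨j, by omega⟩)) (Sum.inr (g, ⟨q, by omega⟩)) :=
      quot_eq_lrel hN (hzej.symm.trans hz)
    simp only [LRel, Fin.val_mk] at hrel
    rcases hrel with ⟨hef', hij⟩ | ⟨h1, h2, hij⟩ | ⟨hj0, hq0, hf⟩ | ⟨hj0, hqN, hf⟩ |
      ⟨hjN, hq0, hf⟩ | ⟨hjN, hqN, hf⟩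
    · -- same edge
      have heg : e = g := Subtype.ext hef'
      subst heg
      exact Or.inr (Or.inl ⟨e, i, q', hi, hq', hx, hz', by omega, by omega, by omega⟩)
    · -- reversed edge
      have heg : erev g = e := Subtype.ext (Prod.ext h1.symm h2.symm)
      have hz'' : z' = mkv N G e (N - q') (by omega) := by
        rw [hz', mkv_flip, mkv_congr (erev g) _ (by omega) rfl]
        rw [heg]
      exact Or.inr (Or.inl ⟨e, i, N - q', hi, by omega, hx, hz'', by omega, by omega,
        by omega⟩)
    · -- z is the near endpoint, new edge from e.1.1-side... center e.1.1 = g.1.1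
      refine Or.inr (Or.inr ⟨e, g, i, q', hi, hq', hf, hx, hz', by omega, by omega⟩)
    · -- z is inl, q = N: reverse g
      refine Or.inr (Or.inr ⟨e, erev g, i, N - q', hi, by omega, by rw [erev_fst, ← hf],
        hx, ?_, by omega, by omega⟩)
      rw [hz', mkv_flip]
    · -- j = N: x's far end; reorient x
      refine Or.inr (Or.inr ⟨erev e, g, N - i, q', by omega, hq', by rw [erev_fst, hf],
        ?_, hz', by omega, by omega⟩)
      rw [hx, mkv_flip]
    · refine Or.inr (Or.inr ⟨erev e, erev g, N - i, N - q', by omega, by omega,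
        by rw [erev_fst, erev_fst, hf], ?_, ?_, by omega, by omega⟩)
      · rw [hx, mkv_flip]
      · rw [hz', mkv_flip]
  · -- two-edge clause
    have hrel : LRel N G (Sum.inr (f, ⟨j, by omega⟩)) (Sum.inr (g, ⟨q, by omega⟩)) :=
      quot_eq_lrel hN (hzfj.symm.trans hz)
    simp only [LRel, Fin.val_mk] at hrel
    rcases hrel with ⟨hfg, hij⟩ | ⟨h1, h2, hij⟩ | ⟨hj0, hq0, hff⟩ | ⟨hj0, hqN, hff⟩ |
      ⟨hjN, hq0, hff⟩ | ⟨hjN, hqN, hff⟩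
    · have hfg' : f = g := Subtype.ext hfg
      subst hfg'
      exact Or.inr (Or.inr ⟨e, f, i, q', hi, hq', hef, hx, hz', by omega, by omega⟩)
    · have heg : erev g = f := Subtype.ext (Prod.ext h1.symm h2.symm)
      have hz'' : z' = mkv N G f (N - q') (by omega) := by
        rw [hz', mkv_flip, mkv_congr (erev g) _ (by omega) rfl]
        rw [heg]
      exact Or.inr (Or.inr ⟨e, f, i, N - q', hi, by omega, hef, hx, hz'', by omega,
        by omega⟩)
    · exact Or.inr (Or.inr ⟨e, g, i, q', hi, hq', by rw [hef, hff], hx, hz', by omega,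
        by omega⟩)
    · refine Or.inr (Or.inr ⟨e, erev g, i, N - q', hi, by omega,
        by rw [erev_fst, ← hff, ← hef], hx, ?_, by omega, by omega⟩)
      rw [hz', mkv_flip]
    · omega
    · omega

lemma key_walk {N c : ℕ} (hN : 0 < N) (hcN : c ≤ N) :
    ∀ n, n ≤ c → ∀ w : ℕ → (LambdaR N G).V, IsWalk (LambdaR N G) n w →
      KInv N G n (w 0) (w n) := by
  intro n
  induction n with
  | zero => intro _ w _; exact Or.inl ⟨rfl, rfl⟩
  | succ n ih =>
    intro hn w hw
    exact kinv_step hN hcN hn (ih (by omega) w (fun i hi => hw i (by omega)))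
      (hw n (by omega))

/-- KEY: a `c`-walk in `Λ_{bc} G` contracts to an edge of `Λ_b G`. -/
lemma key {b c : ℕ} (hb : 0 < b) (hc : c % 2 = 1) {x y : (LambdaR (b * c) G).V}
    (h : WalkFT (LambdaR (b * c) G) c x y) :
    (LambdaR b G).Adj (numap b c G hc x) (numap b c G hc y) := by
  have hc0 : 0 < c := by omega
  have hN : 0 < b * c := by positivity
  have hcN : c ≤ b * c := Nat.le_mul_of_pos_left c hb
  obtain ⟨w, h0, h1, hw⟩ := h
  have hk := key_walk (G := G) hN hcN c le_rfl w hw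
  rw [h0, h1] at hk
  rcases hk with ⟨-, hpar⟩ | ⟨e, i, j, hi, hj, hx, hy, hb1, hb2, hpar⟩ |
    ⟨e, f, i, j, hi, hj, hef, hx, hy, hsum, hpar⟩
  · omega
  · rw [hx, hy, numap_mkv, numap_mkv]
    rcases Nat.le_total i j with hij | hij
    · have := phiF_step hc hij (by omega) (by omega)
      exact lambda_adj_intro e (phiF c i) (phiF c j) _ _ (by omega)
    · have := phiF_step hc hij (by omega) (by omega)
      exact lambda_adj_intro e (phiF c i) (phiF c j) _ _ (by omega)
  · rcases Nat.mod_two_eq_zero_or_one i with hieven | hiodd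
    · have hjodd : j % 2 = 1 := by omega
      have hphii : phiF c i = 0 := phiF_small_even hieven (by omega)
      have hphij : phiF c j = 1 := phiF_small_odd hc0 hjodd (by omega)
      have ex : numap b c G hc x = mkv b G f 0 (Nat.zero_le _) := by
        rw [hx, numap_mkv, mkv_congr e _ (Nat.zero_le _) hphii, mkv_zero, hef]
        exact (mkv_zero f).symm
      have ey : numap b c G hc y = mkv b G f 1 (by omega) := by
        rw [hy, numap_mkv]
        exact mkv_congr f _ _ hphij
      rw [ex, ey]
      exact lambda_adj_intro f 0 1 _ _ (Or.inl rfl)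
    · have hjeven : j % 2 = 0 := by omega
      have hphii : phiF c i = 1 := phiF_small_odd hc0 hiodd (by omega)
      have hphij : phiF c j = 0 := phiF_small_even hjeven (by omega)
      have ex : numap b c G hc x = mkv b G e 1 (by omega) := by
        rw [hx, numap_mkv]
        exact mkv_congr e _ _ hphii
      have ey : numap b c G hc y = mkv b G e 0 (Nat.zero_le _) := by
        rw [hy, numap_mkv, mkv_congr f _ (Nat.zero_le _) hphij, mkv_zero, ← hef]
        exact (mkv_zero e).symm
      rw [ex, ey]
      exact lambda_adj_intro e 1 0 _ _ (Or.inr rfl)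

end Nu

section Mu

variable {G : SymGraph}

/-- The scale-up vertex map `Λ_b G → Λ_{bc} G`. -/
def mumap (b c : ℕ) (G : SymGraph) (hc : 0 < c) : (LambdaR b G).V → (LambdaR (b * c) G).V :=
  Quot.lift
    (fun a => match a with
      | Sum.inl u => mki (b * c) G u
      | Sum.inr (e, i) =>
        mkv (b * c) G e (i.val * c) (Nat.mul_le_mul_right c (Nat.lt_succ_iff.mp i.isLt)))
    (by
      intro a a' h
      induction h with
      | glue u v huv =>
        exact (mkv_zero ⟨(u,v),huv⟩).symm.trans (mkv_congr _ (Nat.zero_le _) _ (by simp))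
      | flip u v huv i =>
        have hi : i.val ≤ b := Nat.lt_succ_iff.mp i.isLt
        refine (mkv_flip ⟨(u,v),huv⟩ (i.val * c) _).trans
          (mkv_congr _ (by omega) _ ?_)
        show b * c - i.val * c = (b - i.val) * c
        rw [Nat.sub_mul])

lemma mumap_mkv (b c : ℕ) (hc : 0 < c) (e : GEdge G) (i : ℕ) (h : i ≤ b) :
    mumap b c G hc (mkv b G e i h) = mkv (b * c) G e (i * c) (Nat.mul_le_mul_right c h) := rfl

lemma wft_run {N : ℕ} (g : GEdge G) :
    ∀ (d p : ℕ) (hp : p ≤ N) (hpd : p + d ≤ N),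
      WalkFT (LambdaR N G) d (mkv N G g p hp) (mkv N G g (p + d) hpd) := by
  intro d
  induction d with
  | zero => intro p hp hpd; exact wft_refl _
  | succ d ih =>
    intro p hp hpd
    exact wft_concat (ih p hp (by omega))
      (wft_adj (lambda_adj_intro g (p + d) (p + d + 1) (by omega) hpd (Or.inl rfl)))

lemma mumap_step (b c : ℕ) (hc : 0 < c) {x y : (LambdaR b G).V}
    (h : (LambdaR b G).Adj x y) :
    WalkFT (LambdaR (b * c) G) c (mumap b c G hc x) (mumap b c G hc y) := by
  obtain ⟨g, q, q', hq, hq', hx, hy, hstep⟩ := lambda_adj_elim h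
  subst hx; subst hy
  rw [mumap_mkv, mumap_mkv]
  rcases hstep with h' | h'
  · subst h'
    have hb1 : (q + 1) * c ≤ b * c := Nat.mul_le_mul_right c hq'
    have e3 : (q + 1) * c = q * c + c := by ring
    have hw := wft_run g c (q * c) (Nat.mul_le_mul_right c hq) (by omega)
    have ev : mkv (b*c) G g (q * c + c) (by omega) =
        mkv (b*c) G g ((q + 1) * c) (Nat.mul_le_mul_right c hq') :=
      mkv_congr g _ _ e3.symm
    exact ev ▸ hw
  · subst h'
    have hb1 : (q' + 1) * c ≤ b * c := Nat.mul_le_mul_right c hq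
    have e3 : (q' + 1) * c = q' * c + c := by ring
    have hw := wft_run g c (q' * c) (Nat.mul_le_mul_right c hq') (by omega)
    have ev : mkv (b*c) G g (q' * c + c) (by omega) =
        mkv (b*c) G g ((q' + 1) * c) (Nat.mul_le_mul_right c hq) :=
      mkv_congr g _ _ e3.symm
    exact wft_rev (ev ▸ hw)

/-- `Λ_1 K → K`: collapse the 1-subdivision. -/
def psi1 (G : SymGraph) : (LambdaR 1 G).Adj →r G.Adj where
  toFun := Quot.lift
    (fun a => match a with
      | Sum.inl u => u
      | Sum.inr (e, i) => if i.val = 0 then e.1.1 else e.1.2)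
    (by
      intro a a' h
      induction h with
      | glue u v huv => simp
      | flip u v huv i =>
        rcases Nat.lt_or_ge i.val 1 with h1 | h1
        · have : i.val = 0 := by omega
          simp [this]
        · have h2 : i.val = 1 := by omega
          simp [h2])
  map_rel' := by
    intro x y h
    obtain ⟨g, q, q', hq, hq', hx, hy, hstep⟩ := lambda_adj_elim h
    subst hx; subst hy
    rcases hstep with h' | h'
    · have hq0 : q = 0 := by omega
      have hq1 : q' = 1 := by omega
      subst hq0; subst hq1
      show G.Adj (if (0:ℕ) = 0 then g.1.1 else g.1.2) (if (1:ℕ) = 0 then g.1.1 else g.1.2)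
      simpa using g.2
    · have hq0 : q' = 0 := by omega
      have hq1 : q = 1 := by omega
      subst hq0; subst hq1
      show G.Adj (if (1:ℕ) = 0 then g.1.1 else g.1.2) (if (0:ℕ) = 0 then g.1.1 else g.1.2)
      simpa using G.symm g.2

end Mu

section OmegaLem

variable {A H : SymGraph}

/-- The counit `Γ_{2k+1}(Ω_k H) → H`. -/
def counitHom (m k : ℕ) (hm : m = 2 * k + 1) (H : SymGraph) :
    (GammaM m (OmegaM k H)).Adj →r H.Adj where
  toFun := fun p => p.1.1
  map_rel' := by
    intro p q h
    subst hm
    obtain ⟨w, h0, h1, hw⟩ := h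
    have asc : ∀ j (hj : j ≤ k), (w 0).1.1 ∈ extT H (w j).1.1 (w j).1.2 ⟨j, by omega⟩ := by
      intro j
      induction j with
      | zero => intro _; exact rfl
      | succ j ih =>
        intro hj
        have hadj := hw j (by omega)
        have hsub := (hadj.1 ⟨j, by omega⟩).1
        exact hsub (ih (by omega))
    have desc : ∀ j (hj : j ≤ k),
        (w (2*k+1)).1.1 ∈ extT H (w (2*k+1-j)).1.1 (w (2*k+1-j)).1.2 ⟨j, by omega⟩ := by
      intro j
      induction j with
      | zero => intro _; exact rfl
      | succ j ih =>
        intro hj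
        have hadj := hw (2*k-j) (by omega)
        have hsub := (hadj.1 ⟨j, by omega⟩).2
        have e1 : 2*k-j+1 = 2*k+1-j := by omega
        rw [e1] at hsub
        have e2 : 2*k+1-(j+1) = 2*k-j := by omega
        rw [e2]
        exact hsub (ih (by omega))
    have hadj := hw k (by omega)
    have hcj := hadj.2
    have ha := asc k le_rfl
    have hd := desc k le_rfl
    have e3 : 2*k+1-k = k+1 := by omega
    rw [e3] at hd
    have : H.Adj (w 0).1.1 (w (2*k+1)).1.1 := hcj _ ha _ hd
    rwa [h0, h1] at this

/-- Image of the set of endpoints of `d`-walks from `a`. -/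
def imgSet (F : A.V → H.V) (a : A.V) (d : ℕ) : Set H.V :=
  {h | ∃ x, WalkFT A d a x ∧ F x = h}

lemma imgSet_zero (F : A.V → H.V) (a : A.V) : imgSet F a 0 = {F a} := by
  ext h
  constructor
  · rintro ⟨x, hw, rfl⟩
    rw [← wft_zero hw]
    rfl
  · rintro rfl
    exact ⟨a, wft_refl a, rfl⟩

lemma level_eq (F : A.V → H.V) (a : A.V) (k : ℕ) (j : Fin (k+1)) :
    extT H (F a, fun i : Fin k => imgSet F a (i.val + 1)).1
      (F a, fun i : Fin k => imgSet F a (i.val + 1)).2 j = imgSet F a j.val := by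
  cases j using Fin.cases with
  | zero => exact (imgSet_zero F a).symm
  | succ i => rfl

/-- The transpose `A → Ω_k H` of a homomorphism `Γ_{2k+1} A → H`. -/
def transHom (m k : ℕ) (hm : m = 2 * k + 1) (F : (GammaM m A).Adj →r H.Adj) :
    A.Adj →r (OmegaM k H).Adj where
  toFun := fun a => ⟨(F a, fun i : Fin k => imgSet (A := A) (⇑F) a (i.val + 1)), by
    intro i
    show CJ H _ _
    rw [level_eq (A := A) (⇑F) a k i.castSucc, level_eq (A := A) (⇑F) a k i.succ]
    intro b hb b' hb'
    obtain ⟨x, hx, rfl⟩ := hb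
    obtain ⟨x', hx', rfl⟩ := hb'
    have hik : i.val < k := i.isLt
    have hcomb := wft_concat (wft_rev hx) hx'
    rw [Fin.coe_castSucc, Fin.val_succ] at hcomb
    exact F.map_rel (wft_pad (by omega) (by omega) (by omega) hcomb)⟩
  map_rel' := by
    intro a b hab
    refine ⟨fun i => ⟨?_, ?_⟩, ?_⟩
    · intro h hh
      rw [level_eq (A := A) (⇑F) a k i.castSucc] at hh
      rw [level_eq (A := A) (⇑F) b k i.succ]
      obtain ⟨x, hx, rfl⟩ := hh
      refine ⟨x, ?_, rfl⟩
      have hc := wft_concat (wft_adj (A.symm hab)) hx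
      rw [Fin.coe_castSucc] at hc
      rw [Fin.val_succ]
      rwa [Nat.add_comm] at hc
    · intro h hh
      rw [level_eq (A := A) (⇑F) b k i.castSucc] at hh
      rw [level_eq (A := A) (⇑F) a k i.succ]
      obtain ⟨x, hx, rfl⟩ := hh
      refine ⟨x, ?_, rfl⟩
      have hc := wft_concat (wft_adj hab) hx
      rw [Fin.coe_castSucc] at hc
      rw [Fin.val_succ]
      rwa [Nat.add_comm] at hc
    · show CJ H _ _
      rw [level_eq (A := A) (⇑F) a k (Fin.last k), level_eq (A := A) (⇑F) b k (Fin.last k)]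
      intro h hh h' hh'
      obtain ⟨x, hx, rfl⟩ := hh
      obtain ⟨x', hx', rfl⟩ := hh'
      have hcomb := wft_concat (wft_concat (wft_rev hx) (wft_adj hab)) hx'
      have e : (Fin.last k).val + 1 + (Fin.last k).val = m := by
        have h5 : (Fin.last k).val = k := rfl
        omega
      rw [e] at hcomb
      exact F.map_rel hcomb

end OmegaLem

/-- Packaged scaling-down homomorphism `Γ_{ac}(Λ_N K) → Γ_a(Λ_b K)` for `N = bc`. -/
def homKeyN (a b c N : ℕ) (hb : 0 < b) (hc : c % 2 = 1) (hN : N = b * c) (K : SymGraph) :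
    (GammaM (a * c) (LambdaR N K)).Adj →r (GammaM a (LambdaR b K)).Adj := by
  subst hN
  exact homGammaDiv a c (numap b c K hc) (fun x y h => key hb hc h)

/-- For odd positive integers `s = 2k+1`, `r`, `s' = 2k'+1`, `r'` with `s/r ≤ s'/r'`,
every graph `G` admits a homomorphism `P^s_r(G) → P^{s'}_{r'}(G)` and a homomorphism
`R^{r'}_{s'}(G) → R^r_s(G)`. -/
theorem powers_ordered (s r s' r' k k' : ℕ) (hs : s = 2 * k + 1) (hs' : s' = 2 * k' + 1)
    (hr : Odd r) (hr' : Odd r') (hle : s * r' ≤ s' * r) (G : SymGraph) :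
    Nonempty ((PF s r G).Adj →r (PF s' r' G).Adj) ∧
    Nonempty ((RF r' k' G).Adj →r (RF r k G).Adj) := by
  have hr2 : r % 2 = 1 := Nat.odd_iff.mp hr
  have hr'2 : r' % 2 = 1 := Nat.odd_iff.mp hr'
  have hs2 : s % 2 = 1 := by omega
  have hs'2 : s' % 2 = 1 := by omega
  have hr0 : 0 < r := by omega
  have hr'0 : 0 < r' := by omega
  have hs0 : 0 < s := by omega
  have hs'0 : 0 < s' := by omega
  constructor
  · -- `P^s_r(G) → P^{s'}_{r'}(G)`
    refine ⟨?_⟩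
    have step1 : (GammaM s (LambdaR r G)).Adj →r
        (GammaM (s * r') (LambdaR (r * r') G)).Adj :=
      homGammaMul s r' (mumap r r' G hr'0) (fun x y h => mumap_step r r' hr'0 h)
    have psr' : (s * r') % 2 = 1 := by rw [Nat.mul_mod, hs2, hr'2]
    have ps'r : (s' * r) % 2 = 1 := by rw [Nat.mul_mod, hs'2, hr2]
    have step2 : (GammaM (s * r') (LambdaR (r * r') G)).Adj →r
        (GammaM (s' * r) (LambdaR (r * r') G)).Adj :=
      homGammaMono _ _ (Nat.mul_pos hs0 hr'0) hle (by omega)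
    have step3 : (GammaM (s' * r) (LambdaR (r * r') G)).Adj →r
        (GammaM s' (LambdaR r' G)).Adj :=
      homKeyN s' r' r (r * r') hr'0 hr2 (Nat.mul_comm r r') G
    exact step3.comp (step2.comp step1)
  · -- `R^{r'}_{s'}(G) → R^r_s(G)`
    refine ⟨?_⟩
    have hmK : s' * s = 2 * (2 * k' * k + k' + k) + 1 := by rw [hs, hs']; ring
    have hmK' : s * s' = 2 * (2 * k' * k + k' + k) + 1 := by rw [hs, hs']; ring
    have c2a : (GammaM (s' * s) (LambdaR s (OmegaM k' G))).Adj →r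
        (GammaM s' (LambdaR 1 (OmegaM k' G))).Adj :=
      homKeyN s' 1 s s one_pos hs2 (Nat.one_mul s).symm (OmegaM k' G)
    have c2b : (GammaM s' (LambdaR 1 (OmegaM k' G))).Adj →r
        (GammaM s' (OmegaM k' G)).Adj := homGammaOf (psi1 (OmegaM k' G))
    have c2c : (GammaM s' (OmegaM k' G)).Adj →r G.Adj := counitHom s' k' hs' G
    have comp1 : (GammaM (s' * s) (LambdaR s (OmegaM k' G))).Adj →r G.Adj :=
      c2c.comp (c2b.comp c2a)
    have g2 : (LambdaR s (OmegaM k' G)).Adj →r (OmegaM (2 * k' * k + k' + k) G).Adj :=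
      transHom (s' * s) (2 * k' * k + k' + k) hmK comp1
    have sig1 : ∀ x y, (OmegaM k' G).Adj x y →
        WalkFT (OmegaM (2 * k' * k + k' + k) G) s
          (g2 (mki s (OmegaM k' G) x)) (g2 (mki s (OmegaM k' G) y)) := by
      intro a a' h
      have hrun := wft_run (N := s) (⟨(a, a'), h⟩ : GEdge (OmegaM k' G)) s 0
        (Nat.zero_le s) (by omega)
      have e0 : mkv s (OmegaM k' G) ⟨(a, a'), h⟩ 0 (Nat.zero_le s) =
          mki s (OmegaM k' G) a := mkv_zero _
      have eN : mkv s (OmegaM k' G) ⟨(a, a'), h⟩ (0 + s) (by omega) =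
          mki s (OmegaM k' G) a' := by
        rw [mkv_congr _ _ le_rfl (by omega)]
        exact mkv_last _
      rw [e0, eN] at hrun
      exact wft_map g2 hrun
    have S2 : (GammaM r' (OmegaM k' G)).Adj →r
        (GammaM (r' * s) (OmegaM (2 * k' * k + k' + k) G)).Adj :=
      homGammaMul r' s (fun a => g2 (mki s (OmegaM k' G) a)) sig1
    have pr's : (r' * s) % 2 = 1 := by rw [Nat.mul_mod, hr'2, hs2]
    have prs' : (r * s') % 2 = 1 := by rw [Nat.mul_mod, hr2, hs'2]
    have hle2 : r' * s ≤ r * s' := by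
      have e1 : r' * s = s * r' := Nat.mul_comm _ _
      have e2 : r * s' = s' * r := Nat.mul_comm _ _
      omega
    have S3 : (GammaM (r' * s) (OmegaM (2 * k' * k + k' + k) G)).Adj →r
        (GammaM (r * s') (OmegaM (2 * k' * k + k' + k) G)).Adj :=
      homGammaMono _ _ (Nat.mul_pos hr'0 hs0) hle2 (by omega)
    have F4inner : (GammaM s (GammaM s' (OmegaM (2 * k' * k + k' + k) G))).Adj →r
        (GammaM (s * s') (OmegaM (2 * k' * k + k' + k) G)).Adj :=
      homGammaMul s s' (fun x => x) (fun x y h => h)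
    have F4 : (GammaM s (GammaM s' (OmegaM (2 * k' * k + k' + k) G))).Adj →r G.Adj :=
      (counitHom (s * s') (2 * k' * k + k' + k) hmK' G).comp F4inner
    have step4map : (GammaM s' (OmegaM (2 * k' * k + k' + k) G)).Adj →r (OmegaM k G).Adj :=
      transHom s k hs F4
    have S4 : (GammaM (r * s') (OmegaM (2 * k' * k + k' + k) G)).Adj →r
        (GammaM r (OmegaM k G)).Adj :=
      homGammaDiv r s' (⇑step4map) (fun x y h => step4map.map_rel h)
    exact S4.comp (S3.comp S2)
end
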